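/- Consider the signed grammar G over the one-letter alphabet {a} with nonterminals {S, A, B}, start symbol S, and productions S → A, S → B, A → −aA, A → λ, B → aaB, B → a (where the production A → −aA carries sign −1 and all other productions carry sign +1). Then G is admissible and generates the language (aa)* = { a^{2i} : i ≥ 0 }; explicitly, n_{aⁿ}(G) = 1 if n is even and n_{aⁿ}(G) = 0 if n is odd. -/

import Mathlib

/-- A parse-tree node: either a terminal leaf or an internal node labeled by a
nonterminal with a list of children. -/
inductive PTree (N : Type) (T : Type) : Type where
  | leaf (t : T) : PTree N T
  | node (A : N) (children : List (PTree N T)) : PTree N T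

namespace PTree

variable {N T : Type}

/-- The symbol (nonterminal or terminal) labeling the root of a tree. -/
def toSymbol : PTree N T → N ⊕ T
  | leaf t => Sum.inr t
  | node A _ => Sum.inl A

/-- The yield of a parse tree: the word spelled by its leaves. -/
def yield : PTree N T → List T
  | leaf t => [t]
  | node _ cs => cs.attach.flatMap (fun c => yield c.1)
decreasing_by simp only [PTree.node.sizeOf_spec]; have h := List.sizeOf_lt_of_mem c.2; omega

/-- The sign of a parse tree w.r.t. a sign assignment on productions:
the product of the signs of the productions used at its nodes. -/
def sign (σ : N × List (N ⊕ T) → ℤ) : PTree N T → ℤ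
  | leaf _ => 1
  | node A cs => σ (A, cs.map toSymbol) * (cs.attach.map (fun c => sign σ c.1)).prod
decreasing_by simp only [PTree.node.sizeOf_spec]; have h := List.sizeOf_lt_of_mem c.2; omega

/-- Validity of a parse tree w.r.t. a set of productions: at every internal node,
the node label together with the list of symbols of its children is a production. -/
inductive Valid (R : Set (N × List (N ⊕ T))) : PTree N T → Prop where
  | leaf (t : T) : Valid R (PTree.leaf t)
  | node (A : N) (cs : List (PTree N T)) :
      (A, cs.map toSymbol) ∈ R → (∀ c ∈ cs, Valid R c) → Valid R (PTree.node A cs)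

end PTree

/-- A signed grammar over a (finite) terminal alphabet `T`: a context-free grammar
with finitely many nonterminals and productions, together with a sign `1` or `-1`
attached to each production. -/
structure SignedGrammar (T : Type) : Type 1 where
  /-- the type of nonterminals -/
  N : Type
  finN : Finite N
  /-- the start symbol -/
  start : N
  /-- the productions `A → α`, `α ∈ (N ∪ T)*` -/
  rules : Set (N × List (N ⊕ T))
  finRules : rules.Finite
  /-- the sign of each production -/
  sign : N × List (N ⊕ T) → ℤ
  sign_valid : ∀ r ∈ rules, sign r = 1 ∨ sign r = -1

namespace SignedGrammar

variable {T : Type}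

/-- A parse tree over the grammar: a valid tree whose root is labeled by the start symbol. -/
def IsParseTree (G : SignedGrammar T) (t : PTree G.N T) : Prop :=
  PTree.Valid G.rules t ∧ t.toSymbol = Sum.inl G.start

/-- The set of parse trees over `G` with yield `w`. -/
def parseTreesOf (G : SignedGrammar T) (w : List T) : Set (PTree G.N T) :=
  {t | G.IsParseTree t ∧ t.yield = w}

/-- `G` is admissible if every word has only finitely many parse trees. -/
def Admissible (G : SignedGrammar T) : Prop :=
  ∀ w : List T, (G.parseTreesOf w).Finite

/-- `n_w(G)`: the sum of the signs of all parse trees over `G` with yield `w`. -/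
noncomputable def count (G : SignedGrammar T) (w : List T) : ℤ :=
  ∑ᶠ t ∈ G.parseTreesOf w, t.sign G.sign

/-- `G` generates the language `L` if `G` is admissible, `n_w(G) = 1` for every
`w ∈ L` and `n_w(G) = 0` for every `w ∉ L`. -/
def Generates (G : SignedGrammar T) (L : Language T) : Prop :=
  G.Admissible ∧ (∀ w ∈ L, G.count w = 1) ∧ (∀ w ∉ L, G.count w = 0)

/-- An ordinary context-free grammar: every production has sign `+1`. -/
def Ordinary (G : SignedGrammar T) : Prop :=
  ∀ r ∈ G.rules, G.sign r = 1

/-- The language generated by `G` in the usual sense: all yields of parse trees. -/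
def language (G : SignedGrammar T) : Language T :=
  {w | ∃ t : PTree G.N T, G.IsParseTree t ∧ t.yield = w}

/-- `G` is unambiguous if every word has at most one parse tree. -/
def Unambiguous (G : SignedGrammar T) : Prop :=
  ∀ t₁ t₂ : PTree G.N T, G.IsParseTree t₁ → G.IsParseTree t₂ →
    t₁.yield = t₂.yield → t₁ = t₂

/-- The number of parse trees of `G` with yield `w` (degree of ambiguity of `w`). -/
noncomputable def ambCount (G : SignedGrammar T) (w : List T) : ℕ :=
  Nat.card {t : PTree G.N T // t ∈ G.parseTreesOf w}

end SignedGrammar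


/-- Nonterminals `{S, A, B}`. -/
inductive NT11 : Type
  | S
  | A
  | B
deriving DecidableEq

instance : Fintype NT11 where
  elems := {NT11.S, NT11.A, NT11.B}
  complete := by intro x; cases x <;> simp

/-- The signed grammar over `{a}` (the single terminal being `() : Unit`) with
productions `S → A | B`, `A → -aA | λ`, `B → aaB | a`, where `A → -aA` has
sign `-1` and all other productions have sign `+1`. -/
def G11 : SignedGrammar Unit where
  N := NT11
  finN := inferInstance
  start := NT11.S
  rules := {(NT11.S, [Sum.inl NT11.A]),
            (NT11.S, [Sum.inl NT11.B]),
            (NT11.A, [Sum.inr (), Sum.inl NT11.A]),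
            (NT11.A, []),
            (NT11.B, [Sum.inr (), Sum.inr (), Sum.inl NT11.B]),
            (NT11.B, [Sum.inr ()])}
  finRules := Set.Finite.insert _ (Set.Finite.insert _ (Set.Finite.insert _
    (Set.Finite.insert _ (Set.Finite.insert _ (Set.finite_singleton _)))))
  sign := fun r => if r = (NT11.A, [Sum.inr (), Sum.inl NT11.A]) then -1 else 1
  sign_valid := by
    intro r _
    try dsimp only
    split
    · exact Or.inr rfl
    · exact Or.inl rfl

attribute [reducible] G11


namespace PTree

lemma yield_node {N T : Type} (A : N) (cs : List (PTree N T)) :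
    (PTree.node A cs).yield = cs.flatMap PTree.yield := by
  rw [PTree.yield]
  conv_rhs => rw [← List.attach_map_subtype_val cs]
  rw [List.flatMap_map]

lemma sign_node {N T : Type} (σ : N × List (N ⊕ T) → ℤ) (A : N) (cs : List (PTree N T)) :
    (PTree.node A cs).sign σ = σ (A, cs.map toSymbol) * (cs.map (PTree.sign σ)).prod := by
  rw [PTree.sign]
  congr 1
  conv_rhs => rw [← List.attach_map_subtype_val cs]
  rw [List.map_map]
  rfl

end PTree

@[simp] lemma toSymbol_leaf {N T : Type} (t : T) :
    (PTree.leaf t : PTree N T).toSymbol = Sum.inr t := rfl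
@[simp] lemma toSymbol_node {N T : Type} (A : N) (cs : List (PTree N T)) :
    (PTree.node A cs).toSymbol = Sum.inl A := rfl

open PTree NT11 in
/-- The unique `A`-rooted parse tree with yield `aⁿ`. -/
def Ach : ℕ → PTree NT11 Unit
  | 0 => .node .A []
  | n+1 => .node .A [.leaf (), Ach n]

open PTree NT11 in
/-- The unique `B`-rooted parse tree with yield `a^{2k+1}`. -/
def Bch : ℕ → PTree NT11 Unit
  | 0 => .node .B [.leaf ()]
  | k+1 => .node .B [.leaf (), .leaf (), Bch k]

@[simp] lemma Ach_toSymbol (n : ℕ) : (Ach n).toSymbol = Sum.inl NT11.A := by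
  cases n <;> rfl

@[simp] lemma Bch_toSymbol (k : ℕ) : (Bch k).toSymbol = Sum.inl NT11.B := by
  cases k <;> rfl

lemma Ach_yield (n : ℕ) : (Ach n).yield = List.replicate n () := by
  induction n with
  | zero => simp [Ach, PTree.yield_node]
  | succ n ih => simp [Ach, PTree.yield_node, ih, PTree.yield, List.replicate_succ]

lemma Bch_yield (k : ℕ) : (Bch k).yield = List.replicate (2*k+1) () := by
  induction k with
  | zero => simp [Bch, PTree.yield_node, PTree.yield]
  | succ k ih =>
    simp [Bch, PTree.yield_node, ih, PTree.yield, List.replicate_succ]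
    constructor

lemma mem_rulesA : (NT11.A, [Sum.inr (), Sum.inl NT11.A]) ∈ G11.rules := by
  simp [G11]
lemma mem_rulesA0 : (NT11.A, ([] : List (NT11 ⊕ Unit))) ∈ G11.rules := by
  simp [G11]
lemma mem_rulesB : (NT11.B, [Sum.inr (), Sum.inr (), Sum.inl NT11.B]) ∈ G11.rules := by
  simp [G11]
lemma mem_rulesB0 : (NT11.B, [Sum.inr ()]) ∈ G11.rules := by
  simp [G11]
lemma mem_rulesSA : (NT11.S, [Sum.inl NT11.A]) ∈ G11.rules := by
  simp [G11]
lemma mem_rulesSB : (NT11.S, [Sum.inl NT11.B]) ∈ G11.rules := by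
  simp [G11]

lemma signA : G11.sign (NT11.A, [Sum.inr (), Sum.inl NT11.A]) = -1 := by simp [G11]
lemma signA0 : G11.sign (NT11.A, ([] : List (NT11 ⊕ Unit))) = 1 := by simp [G11]
lemma signB : G11.sign (NT11.B, [Sum.inr (), Sum.inr (), Sum.inl NT11.B]) = 1 := by simp [G11]
lemma signB0 : G11.sign (NT11.B, [Sum.inr ()]) = 1 := by simp [G11]
lemma signSA : G11.sign (NT11.S, [Sum.inl NT11.A]) = 1 := by simp [G11]
lemma signSB : G11.sign (NT11.S, [Sum.inl NT11.B]) = 1 := by simp [G11]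

lemma Ach_valid (n : ℕ) : PTree.Valid G11.rules (Ach n) := by
  induction n with
  | zero =>
    exact PTree.Valid.node _ _ (by simp [G11]) (by simp)
  | succ n ih =>
    refine PTree.Valid.node _ _ ?_ ?_
    · simp [G11]
    · intro c hc
      simp [Ach] at hc
      rcases hc with h | h <;> subst h
      · exact PTree.Valid.leaf ()
      · exact ih

lemma Bch_valid (k : ℕ) : PTree.Valid G11.rules (Bch k) := by
  induction k with
  | zero =>
    refine PTree.Valid.node _ _ (by simp [G11]) ?_
    intro c hc; simp [Bch] at hc; subst hc; exact PTree.Valid.leaf ()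
  | succ k ih =>
    refine PTree.Valid.node _ _ (by simp [G11]) ?_
    intro c hc
    simp [Bch] at hc
    rcases hc with h | h <;> subst h
    · exact PTree.Valid.leaf ()
    · exact ih

lemma sign_leaf : PTree.sign G11.sign (PTree.leaf () : PTree NT11 Unit) = 1 := by
  rw [PTree.sign]

lemma Ach_sign (n : ℕ) : (Ach n).sign G11.sign = (-1)^n := by
  induction n with
  | zero =>
    show (PTree.node NT11.A []).sign G11.sign = 1
    rw [PTree.sign_node]; simp [G11]
  | succ n ih =>
    show (PTree.node NT11.A [.leaf (), Ach n]).sign G11.sign = _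
    rw [PTree.sign_node]
    simp only [List.map_cons, List.map_nil, toSymbol_leaf, Ach_toSymbol,
      List.prod_cons, List.prod_nil]
    have h1 := sign_leaf
    simp only [G11] at ih h1 ⊢
    rw [ih, h1]
    simp
    ring

lemma Bch_sign (k : ℕ) : (Bch k).sign G11.sign = 1 := by
  induction k with
  | zero =>
    show (PTree.node NT11.B [.leaf ()]).sign G11.sign = 1
    rw [PTree.sign_node]
    simp only [List.map_cons, List.map_nil, toSymbol_leaf, List.prod_cons, List.prod_nil]
    have h1 := sign_leaf
    simp only [G11] at h1 ⊢
    rw [h1]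
    simp
  | succ k ih =>
    show (PTree.node NT11.B [.leaf (), .leaf (), Bch k]).sign G11.sign = 1
    rw [PTree.sign_node]
    simp only [List.map_cons, List.map_nil, toSymbol_leaf, Bch_toSymbol,
      List.prod_cons, List.prod_nil]
    have h1 := sign_leaf
    simp only [G11] at ih h1 ⊢
    rw [ih, h1]
    simp


set_option linter.constructorNameAsVariable false

lemma eq_leaf_of_toSymbol {t : PTree NT11 Unit} (h : t.toSymbol = Sum.inr ()) :
    t = PTree.leaf () := by
  cases t with
  | leaf u => cases u; rfl
  | node A cs => simp at h

lemma yield_leaf : (PTree.leaf () : PTree NT11 Unit).yield = [()] := by rw [PTree.yield]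

lemma classifyAB (t : PTree NT11 Unit) (hv : PTree.Valid G11.rules t) :
    (t.toSymbol = Sum.inl NT11.A → t = Ach t.yield.length) ∧
    (t.toSymbol = Sum.inl NT11.B → ∃ k, t.yield = List.replicate (2*k+1) () ∧ t = Bch k) := by
  induction hv with
  | leaf t => simp
  | node A cs hmem hvalid ih =>
    simp only [G11, Set.mem_insert_iff, Set.mem_singleton_iff, Prod.mk.injEq] at hmem
    rcases hmem with ⟨hA, hcs⟩ | ⟨hA, hcs⟩ | ⟨hA, hcs⟩ | ⟨hA, hcs⟩ | ⟨hA, hcs⟩ | ⟨hA, hcs⟩ <;>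
      subst hA
    · exact ⟨by simp, by simp⟩
    · exact ⟨by simp, by simp⟩
    · -- A → aA
      refine ⟨fun _ => ?_, by simp⟩
      rcases cs with _ | ⟨c1, _ | ⟨c2, _ | ⟨c3, cs⟩⟩⟩ <;> simp at hcs
      obtain ⟨h1, h2⟩ := hcs
      have hc1 : c1 = PTree.leaf () := eq_leaf_of_toSymbol h1
      subst hc1
      have hc2 := (ih c2 (by simp)).1 h2
      rw [PTree.yield_node]
      simp only [List.flatMap_cons, List.flatMap_nil, List.append_nil, yield_leaf,
        List.length_append, List.length_cons, List.length_nil]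
      show PTree.node NT11.A [PTree.leaf (), c2] = Ach (1 + c2.yield.length)
      rw [Nat.add_comm]
      conv_lhs => rw [hc2]
      rfl
    · -- A → λ
      refine ⟨fun _ => ?_, by simp⟩
      rcases cs with _ | ⟨c1, cs⟩ <;> simp at hcs
      rw [PTree.yield_node]
      rfl
    · -- B → aaB
      refine ⟨by simp, fun _ => ?_⟩
      rcases cs with _ | ⟨c1, _ | ⟨c2, _ | ⟨c3, _ | ⟨c4, cs⟩⟩⟩⟩ <;> simp at hcs
      obtain ⟨h1, h2, h3⟩ := hcs
      have hc1 : c1 = PTree.leaf () := eq_leaf_of_toSymbol h1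
      have hc2 : c2 = PTree.leaf () := eq_leaf_of_toSymbol h2
      subst hc1; subst hc2
      obtain ⟨k, hky, hkt⟩ := (ih c3 (by simp)).2 h3
      refine ⟨k + 1, ?_, ?_⟩
      · rw [PTree.yield_node]
        simp only [List.flatMap_cons, List.flatMap_nil, List.append_nil, yield_leaf, hky]
        have : 2 * (k + 1) + 1 = (2 * k + 1) + 2 := by ring
        rw [this]
        simp [List.replicate_succ]
      · rw [hkt]; rfl
    · -- B → a
      refine ⟨by simp, fun _ => ?_⟩
      rcases cs with _ | ⟨c1, _ | ⟨c2, cs⟩⟩ <;> simp at hcs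
      have hc1 : c1 = PTree.leaf () := eq_leaf_of_toSymbol hcs
      subst hc1
      refine ⟨0, ?_, rfl⟩
      rw [PTree.yield_node]
      simp [yield_leaf]


lemma unit_list (w : List Unit) : w = List.replicate w.length () := by
  apply List.eq_replicate_length.mpr
  intro b _
  rfl

lemma classifyS (t : PTree NT11 Unit) (hv : PTree.Valid G11.rules t)
    (hs : t.toSymbol = Sum.inl NT11.S) :
    t = PTree.node NT11.S [Ach t.yield.length] ∨
      ∃ k, t.yield = List.replicate (2*k+1) () ∧ t = PTree.node NT11.S [Bch k] := by
  cases hv with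
  | leaf u => simp at hs
  | node A cs hmem hvalid =>
    simp only [toSymbol_node, Sum.inl.injEq] at hs
    subst hs
    simp only [G11, Set.mem_insert_iff, Set.mem_singleton_iff, Prod.mk.injEq] at hmem
    rcases hmem with ⟨_, hcs⟩ | ⟨_, hcs⟩ | ⟨h, _⟩ | ⟨h, _⟩ | ⟨h, _⟩ | ⟨h, _⟩
    · -- S → A
      left
      rcases cs with _ | ⟨c1, _ | ⟨c2, cs⟩⟩ <;> simp at hcs
      have hc1 := (classifyAB c1 (hvalid c1 (by simp))).1 hcs
      rw [PTree.yield_node]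
      simp only [List.flatMap_cons, List.flatMap_nil, List.append_nil]
      conv_lhs => rw [hc1]
    · -- S → B
      right
      rcases cs with _ | ⟨c1, _ | ⟨c2, cs⟩⟩ <;> simp at hcs
      obtain ⟨k, hky, hkt⟩ := (classifyAB c1 (hvalid c1 (by simp))).2 hcs
      refine ⟨k, ?_, ?_⟩
      · rw [PTree.yield_node]
        simp [hky]
      · rw [hkt]
    · exact absurd h (by simp)
    · exact absurd h (by simp)
    · exact absurd h (by simp)
    · exact absurd h (by simp)

lemma memA (n : ℕ) :
    PTree.node NT11.S [Ach n] ∈ G11.parseTreesOf (List.replicate n ()) := by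
  refine ⟨⟨?_, rfl⟩, ?_⟩
  · refine PTree.Valid.node _ _ (by simp [G11]) ?_
    intro c hc
    simp at hc
    subst hc
    exact Ach_valid n
  · rw [PTree.yield_node]
    simp [Ach_yield]

lemma memB (k : ℕ) :
    PTree.node NT11.S [Bch k] ∈ G11.parseTreesOf (List.replicate (2*k+1) ()) := by
  refine ⟨⟨?_, rfl⟩, ?_⟩
  · refine PTree.Valid.node _ _ (by simp [G11]) ?_
    intro c hc
    simp at hc
    subst hc
    exact Bch_valid k
  · rw [PTree.yield_node]
    simp [Bch_yield]

lemma signSA' (n : ℕ) : (PTree.node NT11.S [Ach n]).sign G11.sign = (-1)^n := by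
  rw [PTree.sign_node]
  simp only [List.map_cons, List.map_nil, Ach_toSymbol, List.prod_cons, List.prod_nil]
  have h := Ach_sign n
  simp only [G11] at h ⊢
  rw [h]
  simp

lemma signSB' (k : ℕ) : (PTree.node NT11.S [Bch k]).sign G11.sign = 1 := by
  rw [PTree.sign_node]
  simp only [List.map_cons, List.map_nil, Bch_toSymbol, List.prod_cons, List.prod_nil]
  have h := Bch_sign k
  simp only [G11] at h ⊢
  rw [h]
  simp

lemma AB_ne (n k : ℕ) : PTree.node NT11.S [Ach n] ≠ PTree.node NT11.S [Bch k] := by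
  intro h
  have h2 : (Ach n).toSymbol = (Bch k).toSymbol := by
    injection h with _ h'
    injection h' with h'' _
    rw [h'']
  simp at h2

lemma parseTrees_even (n : ℕ) (hn : Even n) :
    G11.parseTreesOf (List.replicate n ()) = {PTree.node NT11.S [Ach n]} := by
  ext t
  simp only [Set.mem_singleton_iff]
  constructor
  · rintro ⟨⟨hv, hs⟩, hy⟩
    rcases classifyS t hv hs with h | ⟨k, hky, _⟩
    · rw [hy] at h
      simpa using h
    · rw [hy] at hky
      have hlen := congrArg List.length hky
      simp at hlen
      obtain ⟨r, rfl⟩ := hn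
      omega
  · rintro rfl
    exact memA n

lemma parseTrees_odd (k : ℕ) :
    G11.parseTreesOf (List.replicate (2*k+1) ()) =
      {PTree.node NT11.S [Ach (2*k+1)], PTree.node NT11.S [Bch k]} := by
  ext t
  simp only [Set.mem_insert_iff, Set.mem_singleton_iff]
  constructor
  · rintro ⟨⟨hv, hs⟩, hy⟩
    rcases classifyS t hv hs with h | ⟨j, hjy, hjt⟩
    · left
      rw [hy] at h
      simpa using h
    · right
      rw [hy] at hjy
      have := congrArg List.length hjy
      simp at this
      have hjk : j = k := by omega
      rw [hjt, hjk]
  · rintro (rfl | rfl)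
    · exact memA (2*k+1)
    · exact memB k


lemma count_even (n : ℕ) (hn : Even n) : G11.count (List.replicate n ()) = 1 := by
  rw [SignedGrammar.count, parseTrees_even n hn, finsum_mem_singleton, signSA',
    Even.neg_one_pow hn]

lemma count_odd (k : ℕ) : G11.count (List.replicate (2*k+1) ()) = 0 := by
  rw [SignedGrammar.count, parseTrees_odd k, finsum_mem_pair (AB_ne _ _), signSA', signSB',
    Odd.neg_one_pow ⟨k, by ring⟩]
  ring

/-- `G11` is admissible and generates the language `(aa)*`; explicitly,
`n_{aⁿ}(G11) = 1` if `n` is even and `n_{aⁿ}(G11) = 0` if `n` is odd. -/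
theorem G11_generates :
    G11.Generates {w : List Unit | ∃ i : ℕ, w = List.replicate (2 * i) ()} ∧
    ∀ n : ℕ, G11.count (List.replicate n ()) = if Even n then 1 else 0 := by
  have hcount : ∀ n : ℕ, G11.count (List.replicate n ()) = if Even n then 1 else 0 := by
    intro n
    rcases Nat.even_or_odd n with he | ho
    · rw [if_pos he, count_even n he]
    · obtain ⟨k, rfl⟩ := ho
      rw [if_neg (by simp [Nat.even_add_one, parity_simps]), count_odd k]
  refine ⟨⟨?_, ?_, ?_⟩, hcount⟩
  · intro w
    rw [unit_list w]
    rcases Nat.even_or_odd w.length with he | ho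
    · rw [parseTrees_even _ he]
      exact Set.finite_singleton _
    · obtain ⟨k, hk⟩ := ho
      rw [hk, parseTrees_odd k]
      exact (Set.finite_singleton _).insert _
  · rintro w ⟨i, rfl⟩
    rw [hcount]
    simp [Nat.even_mul]
  · intro w hw
    rw [unit_list w]
    rcases Nat.even_or_odd w.length with he | ho
    · exfalso
      obtain ⟨r, hr⟩ := he
      exact hw ⟨r, by rw [unit_list w, hr]; ring_nf⟩
    · obtain ⟨k, hk⟩ := ho
      rw [hk, count_odd k]
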